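/- Let X be a two-dimensional real normed space and let K, A ⊂ X satisfy condition (H) with A + (K \ {0}) ⊂ int_K A. If for all a, a' ∈ A ∩ int K with a ≠ a' and all λ ∈ (0,1) one has λa + (1−λ)a' ∈ int A, then A is convex, for all x, x' ∈ A with x ≠ x' and all λ ∈ (0,1) one has λx + (1−λ)x' ∈ A + (A_∞ \ {0}), and σ_A is (Fréchet) differentiable at every point of int K⁻. -/

import Mathlib

open Set Filter Topology Pointwise

set_option maxHeartbeats 1000000
set_option synthInstance.maxHeartbeats 100000

variable {X : Type*} [NormedAddCommGroup X] [NormedSpace ℝ X]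

/-- The support function `σ_A : X* → ℝ ∪ {+∞}`. -/
noncomputable def supportFn (A : Set X) (f : X →L[ℝ] ℝ) : EReal :=
  ⨆ a ∈ A, (f a : EReal)

/-- The negative dual cone `K⁻ = {x* : ⟨k, x*⟩ ≤ 0 for all k ∈ K}`. -/
def negDual (K : Set X) : Set (X →L[ℝ] ℝ) := {f | ∀ x ∈ K, f x ≤ 0}

/-- `σ_A` is (Fréchet) differentiable at `f`: there is a real-valued function agreeing
with `σ_A` on a neighbourhood of `f` which is differentiable at `f`. -/
def SigmaDiffAt (A : Set X) (f : X →L[ℝ] ℝ) : Prop :=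
  ∃ g : (X →L[ℝ] ℝ) → ℝ, (∀ᶠ y in 𝓝 f, ((g y : ℝ) : EReal) = supportFn A y) ∧
    DifferentiableAt ℝ g f

/-- `int_K A`: the interior of `A` in the subspace topology of `K`. -/
def intWithin (K A : Set X) : Set X :=
  {x ∈ K | ∃ U : Set X, IsOpen U ∧ x ∈ U ∧ K ∩ U ⊆ A}

/-- The recession cone `S_∞` of a set `S`. -/
def recessionCone (S : Set X) : Set X :=
  {u | ∃ t : ℕ → ℝ, (∀ n, 0 < t n) ∧ Tendsto t atTop (𝓝 0) ∧
       ∃ a : ℕ → X, (∀ n, a n ∈ S) ∧ Tendsto (fun n => t n • a n) atTop (𝓝 u)}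

section Aux

variable {K A : Set X}

lemma kadd (hKconv : Convex ℝ K)
    (hKcone : ∀ t : ℝ, 0 ≤ t → ∀ x ∈ K, t • x ∈ K) :
    ∀ a ∈ K, ∀ b ∈ K, a + b ∈ K := by
  intro a ha b hb
  have h : (1/2 : ℝ) • a + (1/2 : ℝ) • b ∈ K :=
    hKconv ha hb (by norm_num) (by norm_num) (by norm_num)
  have h2 := hKcone 2 (by norm_num) _ h
  have heq : (2:ℝ) • ((1/2 : ℝ) • a + (1/2 : ℝ) • b) = a + b := by module
  rwa [heq] at h2

lemma smul_mem_interiorK (hKcone : ∀ t : ℝ, 0 ≤ t → ∀ x ∈ K, t • x ∈ K)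
    {ε : ℝ} (hε : 0 < ε) {e : X} (he : e ∈ interior K) : ε • e ∈ interior K := by
  have hopen : IsOpen (ε • interior K) := isOpen_interior.smul₀ hε.ne'
  have hsub : ε • interior K ⊆ K := by
    rintro - ⟨w, hw, rfl⟩
    exact hKcone ε hε.le w (interior_subset hw)
  exact interior_maximal hsub hopen (smul_mem_smul_set he)

lemma add_mem_interiorK (hKconv : Convex ℝ K)
    (hKcone : ∀ t : ℝ, 0 ≤ t → ∀ x ∈ K, t • x ∈ K)
    {x e : X} (hx : x ∈ K) (he : e ∈ interior K) : x + e ∈ interior K := by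
  have hopen : IsOpen (K + interior K) := IsOpen.add_left isOpen_interior
  have hsub : K + interior K ⊆ K := by
    rintro - ⟨a, ha, b, hb, rfl⟩
    exact kadd hKconv hKcone a ha b (interior_subset hb)
  exact interior_maximal hsub hopen (add_mem_add hx he)

lemma K_subset_recessionCone (hKcone : ∀ t : ℝ, 0 ≤ t → ∀ x ∈ K, t • x ∈ K)
    (hAK : A + K = A) (hAne : A.Nonempty) : K ⊆ recessionCone A := by
  obtain ⟨a₀, ha₀⟩ := hAne
  intro u hu
  refine ⟨fun n => 1 / ((n : ℝ) + 1), fun n => by positivity, ?_,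
    fun n => a₀ + ((n : ℝ) + 1) • u, fun n => ?_, ?_⟩
  · exact tendsto_one_div_add_atTop_nhds_zero_nat
  · rw [← hAK]; exact add_mem_add ha₀ (hKcone _ (by positivity) u hu)
  · have h1 : Tendsto (fun n : ℕ => (1 / ((n:ℝ)+1)) • a₀) atTop (𝓝 ((0:ℝ) • a₀)) :=
      tendsto_one_div_add_atTop_nhds_zero_nat.smul_const a₀
    rw [zero_smul] at h1
    have h2 := h1.add (tendsto_const_nhds (x := u))
    rw [zero_add] at h2
    refine Tendsto.congr (fun n => ?_) h2
    have hne : ((n:ℝ) + 1) ≠ 0 := by positivity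
    show (1/((n:ℝ)+1)) • a₀ + u = (1/((n:ℝ)+1)) • (a₀ + ((n:ℝ)+1) • u)
    rw [smul_add, smul_smul, one_div, inv_mul_cancel₀ hne, one_smul]

lemma recessionCone_subset_K (hKclosed : IsClosed K)
    (hKcone : ∀ t : ℝ, 0 ≤ t → ∀ x ∈ K, t • x ∈ K)
    (hA : A ⊆ K) : recessionCone A ⊆ K := by
  rintro u ⟨t, htpos, -, a, haA, hconv⟩
  exact hKclosed.mem_of_tendsto hconv
    (Filter.Eventually.of_forall fun n => hKcone _ (htpos n).le _ (hA (haA n)))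

lemma aux_convex (hKconv : Convex ℝ K)
    (hKcone : ∀ t : ℝ, 0 ≤ t → ∀ x ∈ K, t • x ∈ K)
    (hKint : (interior K).Nonempty)
    (hAclosed : IsClosed A) (hAK : A + K = A) (hAsub : A ⊆ K \ {0})
    (hsa : ∀ a ∈ A ∩ interior K, ∀ a' ∈ A ∩ interior K, a ≠ a' →
      ∀ t : ℝ, t ∈ Ioo (0 : ℝ) 1 → t • a + (1 - t) • a' ∈ interior A) :
    Convex ℝ A := by
  rw [convex_iff_forall_pos]
  intro x hx y hy a b ha hb hab
  rcases eq_or_ne x y with rfl | hxy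
  · rw [← add_smul, hab, one_smul]; exact hx
  obtain ⟨e, he⟩ := hKint
  have key : ∀ ε : ℝ, 0 < ε → a • x + b • y + ε • e ∈ A := by
    intro ε hε
    have heK : ε • e ∈ interior K := smul_mem_interiorK hKcone hε he
    have hxA : x + ε • e ∈ A := by
      rw [← hAK]; exact add_mem_add hx (interior_subset heK)
    have hyA : y + ε • e ∈ A := by
      rw [← hAK]; exact add_mem_add hy (interior_subset heK)
    have hxK : x + ε • e ∈ interior K :=
      add_mem_interiorK hKconv hKcone (hAsub hx).1 heK
    have hyK : y + ε • e ∈ interior K :=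
      add_mem_interiorK hKconv hKcone (hAsub hy).1 heK
    have hne : x + ε • e ≠ y + ε • e := by simpa using hxy
    have hmem := hsa _ ⟨hxA, hxK⟩ _ ⟨hyA, hyK⟩ hne a ⟨ha, by linarith⟩
    have heq : a • (x + ε • e) + (1 - a) • (y + ε • e) = a • x + b • y + ε • e := by
      have hb1 : b = 1 - a := by linarith
      rw [hb1]; module
    rw [heq] at hmem
    exact interior_subset hmem
  have hlim : Tendsto (fun n : ℕ => a • x + b • y + (1 / ((n:ℝ)+1)) • e) atTop
      (𝓝 (a • x + b • y)) := by
    have h1 := (tendsto_one_div_add_atTop_nhds_zero_nat (𝕜 := ℝ)).smul_const e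
    rw [zero_smul] at h1
    simpa using (tendsto_const_nhds (x := a • x + b • y)).add h1
  exact hAclosed.mem_of_tendsto hlim
    (Filter.Eventually.of_forall fun n => key _ (by positivity))

lemma aux_seg (hdim : Module.finrank ℝ X = 2)
    (hKconv : Convex ℝ K) (hKclosed : IsClosed K)
    (hKcone : ∀ t : ℝ, 0 ≤ t → ∀ x ∈ K, t • x ∈ K)
    (hKpointed : K ∩ (-K) = {0}) (hKint : (interior K).Nonempty)
    (hAne : A.Nonempty) (hAclosed : IsClosed A)
    (hAK : A + K = A) (hAsub : A ⊆ K \ {0})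
    (hsa : ∀ a ∈ A ∩ interior K, ∀ a' ∈ A ∩ interior K, a ≠ a' →
      ∀ t : ℝ, t ∈ Ioo (0 : ℝ) 1 → t • a + (1 - t) • a' ∈ interior A) :
    ∀ x ∈ A, ∀ x' ∈ A, x ≠ x' → ∀ t : ℝ, t ∈ Ioo (0 : ℝ) 1 →
      t • x + (1 - t) • x' ∈ A + (recessionCone A \ {0}) := by
  haveI : FiniteDimensional ℝ X := FiniteDimensional.of_finrank_eq_succ hdim
  have hKrec : K ⊆ recessionCone A := K_subset_recessionCone hKcone hAK hAne
  have hconv : Convex ℝ A := aux_convex hKconv hKcone hKint hAclosed hAK hAsub hsa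
  intro x hx x' hx' hne t ht
  obtain ⟨ht0, ht1⟩ := ht
  have hx0 : x ≠ 0 := by
    intro h; exact (hAsub hx).2 (by simp [h])
  by_cases hLI : LinearIndependent ℝ ![x, x']
  · -- independent case
    set z := t • x + (1 - t) • x' with hz
    have hzA : z ∈ A := hconv hx hx' ht0.le (by linarith) (by ring)
    have hzK : z ∈ K := (hAsub hzA).1
    have hz0 : z ≠ 0 := by intro h; exact (hAsub hzA).2 (by simp [h])
    -- z ∈ interior K via the open quadrant spanned by x, x'
    have hcard : Fintype.card (Fin 2) = Module.finrank ℝ X := by simp [hdim]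
    obtain ⟨bb, hcoe⟩ : ∃ b : Module.Basis (Fin 2) ℝ X, ⇑b = ![x, x'] :=
      ⟨basisOfLinearIndependentOfCardEqFinrank hLI hcard,
        coe_basisOfLinearIndependentOfCardEqFinrank hLI hcard⟩
    have hb0 : bb 0 = x := by rw [hcoe]; simp
    have hb1 : bb 1 = x' := by rw [hcoe]; simp
    obtain ⟨ψ, hψc⟩ : ∃ ψ : X ≃L[ℝ] (Fin 2 → ℝ), ⇑ψ = ⇑bb.equivFun :=
      ⟨bb.equivFun.toContinuousLinearEquiv, LinearEquiv.coe_toContinuousLinearEquiv' _⟩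
    have hψcoe : ∀ u : X, ψ u = bb.equivFun u := fun u => congrFun hψc u
    have hQopen : IsOpen {v : Fin 2 → ℝ | 0 < v 0 ∧ 0 < v 1} := by
      have h0 : IsOpen {v : Fin 2 → ℝ | 0 < v 0} :=
        isOpen_lt continuous_const (continuous_apply 0)
      have h1 : IsOpen {v : Fin 2 → ℝ | 0 < v 1} :=
        isOpen_lt continuous_const (continuous_apply 1)
      rw [setOf_and]
      exact h0.inter h1
    have hSopen : IsOpen (⇑ψ ⁻¹' {v : Fin 2 → ℝ | 0 < v 0 ∧ 0 < v 1}) :=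
      hQopen.preimage ψ.continuous
    have hSsub : ⇑ψ ⁻¹' {v : Fin 2 → ℝ | 0 < v 0 ∧ 0 < v 1} ⊆ K := by
      intro u hu
      obtain ⟨hu0, hu1⟩ : 0 < bb.equivFun u 0 ∧ 0 < bb.equivFun u 1 := by
        rw [← hψcoe]; exact hu
      have hrepr : bb.equivFun u 0 • x + bb.equivFun u 1 • x' = u := by
        have h := bb.sum_equivFun u
        rw [Fin.sum_univ_two, hb0, hb1] at h
        exact h
      rw [← hrepr]
      exact kadd hKconv hKcone _ (hKcone _ hu0.le x (hAsub hx).1) _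
        (hKcone _ hu1.le x' (hAsub hx').1)
    have hzS : z ∈ ⇑ψ ⁻¹' {v : Fin 2 → ℝ | 0 < v 0 ∧ 0 < v 1} := by
      have hcoord : bb.equivFun z = t • bb.equivFun x + (1 - t) • bb.equivFun x' := by
        rw [hz, map_add, map_smul, map_smul]
      have hc0 : bb.equivFun z 0 = t := by
        rw [hcoord, ← hb0, ← hb1]
        simp [Module.Basis.equivFun_self]
      have hc1 : bb.equivFun z 1 = 1 - t := by
        rw [hcoord, ← hb0, ← hb1]
        simp [Module.Basis.equivFun_self]
      refine mem_preimage.mpr ?_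
      rw [hψcoe]
      exact ⟨by rw [hc0]; exact ht0, by rw [hc1]; linarith⟩
    have hzint : z ∈ interior K := interior_maximal hSsub hSopen hzS
    obtain ⟨ρ, hρ, hball⟩ := Metric.isOpen_iff.mp isOpen_interior z hzint
    set d := x - x' with hd
    have hdne : d ≠ 0 := sub_ne_zero.mpr hne
    set η := min (min (t/2) ((1-t)/2)) (ρ / (2 * (‖d‖ + 1))) with hηdef
    have hηpos : 0 < η :=
      lt_min (lt_min (by linarith) (by linarith)) (by positivity)
    have hηt : η < t := lt_of_le_of_lt ((min_le_left _ _).trans (min_le_left _ _)) (by linarith)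
    have hη1t : η < 1 - t :=
      lt_of_le_of_lt ((min_le_left _ _).trans (min_le_right _ _)) (by linarith)
    have hηd : ‖η • d‖ < ρ := by
      rw [norm_smul, Real.norm_eq_abs, abs_of_pos hηpos]
      have h1 : η ≤ ρ / (2 * (‖d‖ + 1)) := min_le_right _ _
      have h2 : 0 < ‖d‖ + 1 := by positivity
      have h3 : η * ‖d‖ ≤ (ρ / (2 * (‖d‖ + 1))) * ‖d‖ :=
        mul_le_mul_of_nonneg_right h1 (norm_nonneg d)
      have h4 : (ρ / (2 * (‖d‖ + 1))) * ‖d‖ < ρ := by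
        rw [div_mul_eq_mul_div, div_lt_iff₀ (by positivity)]
        nlinarith [norm_nonneg d]
      linarith
    have hz1K : z - η • d ∈ interior K := by
      apply hball
      rw [Metric.mem_ball, dist_eq_norm]
      simpa using hηd
    have hz2K : z + η • d ∈ interior K := by
      apply hball
      rw [Metric.mem_ball, dist_eq_norm]
      simpa using hηd
    have hz1A : z - η • d ∈ A := by
      have heq : z - η • d = (t - η) • x + (1 - (t - η)) • x' := by
        rw [hz, hd]; module
      rw [heq]
      exact hconv hx hx' (by linarith) (by linarith) (by ring)
    have hz2A : z + η • d ∈ A := by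
      have heq : z + η • d = (t + η) • x + (1 - (t + η)) • x' := by
        rw [hz, hd]; module
      rw [heq]
      exact hconv hx hx' (by linarith) (by linarith) (by ring)
    have hneq : z - η • d ≠ z + η • d := by
      intro h
      have h2 : (2 * η) • d = 0 := by
        have h5 : (2 * η) • d = (z + η • d) - (z - η • d) := by module
        rw [h5, ← h, sub_self]
      rcases smul_eq_zero.mp h2 with h4 | h4
      · exact absurd h4 (by positivity)
      · exact hdne h4
    have hmid := hsa _ ⟨hz1A, hz1K⟩ _ ⟨hz2A, hz2K⟩ hneq (1/2) ⟨by norm_num, by norm_num⟩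
    have hmeq : (1/2 : ℝ) • (z - η • d) + (1 - 1/2 : ℝ) • (z + η • d) = z := by
      module
    rw [hmeq] at hmid
    obtain ⟨ρ₂, hρ₂, hball₂⟩ := Metric.isOpen_iff.mp isOpen_interior z hmid
    set δ := ρ₂ / (2 * (‖z‖ + 1)) with hδdef
    have hδpos : 0 < δ := by positivity
    have h1δ : (1 - δ) • z ∈ A := by
      apply interior_subset (hball₂ ?_)
      rw [Metric.mem_ball, dist_eq_norm]
      have heq2 : (1 - δ) • z - z = -(δ • z) := by module
      rw [heq2, norm_neg, norm_smul, Real.norm_eq_abs, abs_of_pos hδpos]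
      have h2 : 0 < ‖z‖ + 1 := by positivity
      have h3 : δ * ‖z‖ ≤ δ * (‖z‖ + 1) := by nlinarith
      have h4 : δ * (‖z‖ + 1) = ρ₂ / 2 := by
        rw [hδdef]; field_simp
      linarith
    have hδzK : δ • z ∈ recessionCone A \ {0} := by
      refine ⟨hKrec (hKcone δ hδpos.le z hzK), ?_⟩
      simp only [mem_singleton_iff, smul_eq_zero, not_or]
      exact ⟨hδpos.ne', hz0⟩
    refine Set.mem_add.mpr ⟨(1 - δ) • z, h1δ, δ • z, hδzK, ?_⟩
    rw [hz]; module
  · -- dependent case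
    rw [LinearIndependent.pair_iff' hx0] at hLI
    push_neg at hLI
    obtain ⟨c, hc⟩ := hLI
    have hx'0 : x' ≠ 0 := by
      intro h; exact (hAsub hx').2 (by simp [h])
    have hcpos : 0 < c := by
      rcases lt_trichotomy c 0 with h | h | h
      · exfalso
        have hmem : x' ∈ K ∩ (-K) := by
          refine ⟨(hAsub hx').1, ?_⟩
          rw [Set.mem_neg]
          have : -x' = (-c) • x := by rw [← hc]; module
          rw [this]
          exact hKcone (-c) (by linarith) x (hAsub hx).1
        rw [hKpointed] at hmem
        exact hx'0 hmem
      · exfalso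
        apply hx'0
        rw [← hc, h, zero_smul]
      · exact h
    have hc1 : c ≠ 1 := by
      intro h
      apply hne
      rw [← hc, h, one_smul]
    rcases lt_or_gt_of_ne hc1 with hlt | hgt
    · -- c < 1 : x - x' = (1-c) • x
      have hco : 0 < t * (1 - c) := by nlinarith
      have hk : (t * (1 - c)) • x ∈ recessionCone A \ {0} := by
        refine ⟨hKrec (hKcone _ hco.le x (hAsub hx).1), ?_⟩
        simp only [mem_singleton_iff, smul_eq_zero, not_or]
        exact ⟨hco.ne', hx0⟩
      refine Set.mem_add.mpr ⟨x', hx', _, hk, ?_⟩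
      rw [← hc]; module
    · -- c > 1 : x' - x = (c-1) • x
      have hco : 0 < (1 - t) * (c - 1) := by nlinarith
      have hk : ((1 - t) * (c - 1)) • x ∈ recessionCone A \ {0} := by
        refine ⟨hKrec (hKcone _ hco.le x (hAsub hx).1), ?_⟩
        simp only [mem_singleton_iff, smul_eq_zero, not_or]
        exact ⟨hco.ne', hx0⟩
      refine Set.mem_add.mpr ⟨x, hx, _, hk, ?_⟩
      rw [← hc]; module

end Aux

/-- Let `X` be two-dimensional and let `K, A` satisfy condition (H) with
`A + (K \ {0}) ⊆ int_K A`. If every open segment joining two distinct points of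
`A ∩ int K` lies in `int A`, then `A` is convex, every open segment joining two distinct
points of `A` lies in `A + (A_∞ \ {0})`, and `σ_A` is differentiable at every point
of `int K⁻`. -/
theorem stmt10 (hdim : Module.finrank ℝ X = 2)
    (K A : Set X)
    (hKconv : Convex ℝ K) (hKclosed : IsClosed K)
    (hKcone : ∀ t : ℝ, 0 ≤ t → ∀ x ∈ K, t • x ∈ K)
    (hKpointed : K ∩ (-K) = {0}) (hKint : (interior K).Nonempty)
    (hAne : A.Nonempty) (hAclosed : IsClosed A)
    (hAK : A + K = A) (hAsub : A ⊆ K \ {0})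
    (hssc : A + (K \ {0}) ⊆ intWithin K A)
    (hsa : ∀ a ∈ A ∩ interior K, ∀ a' ∈ A ∩ interior K, a ≠ a' →
      ∀ t : ℝ, t ∈ Ioo (0 : ℝ) 1 → t • a + (1 - t) • a' ∈ interior A) :
    Convex ℝ A ∧
    (∀ x ∈ A, ∀ x' ∈ A, x ≠ x' → ∀ t : ℝ, t ∈ Ioo (0 : ℝ) 1 →
      t • x + (1 - t) • x' ∈ A + (recessionCone A \ {0})) ∧
    ∀ f ∈ interior (negDual K), SigmaDiffAt A f := by
  have hconv : Convex ℝ A := aux_convex hKconv hKcone hKint hAclosed hAK hAsub hsa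
  have hseg := aux_seg hdim hKconv hKclosed hKcone hKpointed hKint hAne hAclosed hAK hAsub hsa
  refine ⟨hconv, hseg, ?_⟩
  haveI : FiniteDimensional ℝ X := FiniteDimensional.of_finrank_eq_succ hdim
  intro f hf
  obtain ⟨r, hr, hball⟩ : ∃ r > 0, Metric.ball f r ⊆ negDual K := by
    rw [mem_interior_iff_mem_nhds] at hf
    exact Metric.mem_nhds_iff.mp hf
  obtain ⟨a₀, ha₀⟩ := hAne
  have hAsubK : A ⊆ K := fun a ha => (hAsub ha).1
  -- dual estimate
  have claim1 : ∀ y : X →L[ℝ] ℝ, dist y f ≤ r/2 → ∀ k ∈ K, y k ≤ -(r/4) * ‖k‖ := by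
    intro y hy k hk
    rcases eq_or_ne k 0 with rfl | hk0
    · simp
    obtain ⟨g, hg1, hgk⟩ := exists_dual_vector ℝ k (norm_ne_zero_iff.mpr hk0)
    have hmem : y + (r/4) • g ∈ Metric.ball f r := by
      rw [Metric.mem_ball]
      have h1 : dist (y + (r/4) • g) y = ‖(r/4) • g‖ := by
        rw [dist_eq_norm]; congr 1; abel
      have h2 : ‖(r/4) • g‖ = r/4 := by
        have := norm_smul (r/4) g
        rw [this, Real.norm_eq_abs, abs_of_pos (by linarith), hg1, mul_one]
      calc dist (y + (r/4) • g) f ≤ dist (y + (r/4) • g) y + dist y f := dist_triangle _ _ _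
        _ ≤ r/4 + r/2 := by rw [h1, h2]; linarith
        _ < r := by linarith
    have h3 := hball hmem k hk
    have happ : (y + (r/4 : ℝ) • g) k = y k + (r/4) * g k := by
      simp [ContinuousLinearMap.add_apply, ContinuousLinearMap.smul_apply, smul_eq_mul]
    rw [happ] at h3
    have hgk' : g k = ‖k‖ := by exact_mod_cast hgk
    rw [hgk'] at h3
    linarith
  have hdistff : dist f f ≤ r/2 := by simp; positivity
  have hfa₀ : f a₀ ≤ -(r/4) * ‖a₀‖ := claim1 f hdistff a₀ (hAsubK ha₀)
  set R₀ : ℝ := (4/r) * (-(f a₀) + (r/2) * ‖a₀‖) with hR₀def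
  set R : ℝ := R₀ + ‖a₀‖ + 1 with hRdef
  have hfa₀neg : 0 ≤ -(f a₀) := by nlinarith [norm_nonneg a₀]
  have hR₀nn : 0 ≤ R₀ := by
    apply mul_nonneg (by positivity)
    nlinarith [norm_nonneg a₀]
  have hRpos : 0 < R := by positivity
  have ha₀R : ‖a₀‖ ≤ R := by rw [hRdef]; linarith
  set C := A ∩ Metric.closedBall 0 R with hCdef
  have hCcompact : IsCompact C :=
    Metric.isCompact_of_isClosed_isBounded (hAclosed.inter Metric.isClosed_closedBall)
      (Metric.isBounded_closedBall.subset inter_subset_right)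
  have ha₀C : a₀ ∈ C := ⟨ha₀, by rw [Metric.mem_closedBall, dist_zero_right]; exact ha₀R⟩
  have hCne : C.Nonempty := ⟨a₀, ha₀C⟩
  have hCsubA : C ⊆ A := inter_subset_left
  have hCnorm : ∀ a ∈ C, ‖a‖ ≤ R := by
    intro a haa
    have := haa.2
    rwa [Metric.mem_closedBall, dist_zero_right] at this
  set g : (X →L[ℝ] ℝ) → ℝ := fun y => sSup ((fun a => y a) '' C) with hgdef
  have hmax : ∀ y : X →L[ℝ] ℝ, ∃ a ∈ C, (∀ b ∈ C, y b ≤ y a) ∧ g y = y a := by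
    intro y
    obtain ⟨a, haC, hamax⟩ := hCcompact.exists_isMaxOn hCne y.continuous.continuousOn
    have hamax' : ∀ b ∈ C, y b ≤ y a := fun b hb => isMaxOn_iff.mp hamax b hb
    refine ⟨a, haC, hamax', ?_⟩
    have hgr : IsGreatest ((fun a => y a) '' C) (y a) :=
      ⟨mem_image_of_mem _ haC, by rintro - ⟨b, hbC, rfl⟩; exact hamax' b hbC⟩
    exact hgr.csSup_eq
  -- F1 : sup over A is attained in C
  have hF1 : ∀ y : X →L[ℝ] ℝ, dist y f ≤ r/2 → ∀ a ∈ A, y a ≤ g y := by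
    intro y hy a ha
    obtain ⟨am, hamC, hammax, hgy⟩ := hmax y
    rw [hgy]
    by_cases hna : ‖a‖ ≤ R
    · exact hammax a ⟨ha, by rw [Metric.mem_closedBall, dist_zero_right]; exact hna⟩
    push_neg at hna
    have h1 : y a ≤ -(r/4) * ‖a‖ := claim1 y hy a (hAsubK ha)
    have h2 : f a₀ - (r/2) * ‖a₀‖ ≤ y a₀ := by
      have h5 : ‖(y - f) a₀‖ ≤ ‖y - f‖ * ‖a₀‖ := (y - f).le_opNorm a₀
      rw [ContinuousLinearMap.sub_apply] at h5
      have hnf : ‖y - f‖ ≤ r/2 := by rwa [← dist_eq_norm]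
      have h6 : ‖y a₀ - f a₀‖ ≤ (r/2) * ‖a₀‖ :=
        le_trans h5 (mul_le_mul_of_nonneg_right hnf (norm_nonneg a₀))
      rw [Real.norm_eq_abs] at h6
      have := (abs_le.mp h6).1
      linarith
    have h3 : y a ≤ y a₀ := by
      have hRa : R₀ < ‖a‖ := by rw [hRdef] at hna; nlinarith [norm_nonneg a₀]
      have h4 : (r/4) * R₀ = -(f a₀) + (r/2) * ‖a₀‖ := by
        rw [hR₀def]; field_simp
      nlinarith
    exact le_trans h3 (hammax a₀ ha₀C)
  -- unique maximizer of f
  obtain ⟨ahat, hahatC, hahatmax, hgf⟩ := hmax f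
  have huniq : ∀ a ∈ C, f a = f ahat → a = ahat := by
    intro a haC hfa
    by_contra hne2
    have hmem := hseg a (hCsubA haC) ahat (hCsubA hahatC) hne2 (1/2) ⟨by norm_num, by norm_num⟩
    obtain ⟨bb, hbb, u, hu, huv⟩ := hmem
    have huK : u ∈ K := recessionCone_subset_K hKclosed hKcone hAsubK hu.1
    have hu0 : u ≠ 0 := by simpa using hu.2
    have hfu : f u < 0 := by
      have h7 := claim1 f hdistff u huK
      have h8 : 0 < ‖u‖ := norm_pos_iff.mpr hu0
      nlinarith
    have hfbb : f bb ≤ f ahat := by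
      have := hF1 f hdistff bb hbb
      rwa [hgf] at this
    have hcomb : f ((1/2 : ℝ) • a + (1 - 1/2 : ℝ) • ahat) = f ahat := by
      rw [map_add, map_smul, map_smul, hfa, smul_eq_mul, smul_eq_mul]
      ring
    rw [← huv, map_add] at hcomb
    linarith
  -- maximizer continuity estimate
  have hF4 : ∀ ε : ℝ, 0 < ε → ∃ δ : ℝ, 0 < δ ∧
      ∀ y : X →L[ℝ] ℝ, dist y f < δ → g y - y ahat ≤ ε * dist y f := by
    intro ε hε
    set M := C ∩ (Metric.ball ahat ε)ᶜ with hMdef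
    have hMcomp : IsCompact M := hCcompact.inter_right Metric.isOpen_ball.isClosed_compl
    have estimate : ∀ (y : X →L[ℝ] ℝ) (a : X), a ∈ C → (∀ b ∈ C, y b ≤ y a) →
        a ∈ Metric.ball ahat ε → g y = y a → g y - y ahat ≤ ε * dist y f := by
      intro y a haC hamax hball' hgy
      have h1 : f a ≤ f ahat := hahatmax a haC
      have h2 : y a - y ahat - (f a - f ahat) = (y - f) (a - ahat) := by
        simp only [ContinuousLinearMap.sub_apply, map_sub]
        ring
      have h3 : (y - f) (a - ahat) ≤ ‖y - f‖ * ‖a - ahat‖ := by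
        refine le_trans (le_abs_self _) ?_
        rw [← Real.norm_eq_abs]
        exact (y - f).le_opNorm _
      have h4 : ‖a - ahat‖ ≤ ε := by
        rw [Metric.mem_ball, dist_eq_norm] at hball'
        linarith
      have h5 : ‖y - f‖ * ‖a - ahat‖ ≤ ‖y - f‖ * ε :=
        mul_le_mul_of_nonneg_left h4 (norm_nonneg _)
      have h6 : g y - y ahat ≤ ‖y - f‖ * ε := by
        rw [hgy]
        nlinarith
      rw [dist_eq_norm]
      linarith [h6]
    rcases eq_empty_or_nonempty M with hMe | hMne
    · refine ⟨1, one_pos, fun y hy => ?_⟩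
      obtain ⟨a, haC, hamax, hgy⟩ := hmax y
      have hab : a ∈ Metric.ball ahat ε := by
        by_contra h
        exact absurd (show a ∈ M from ⟨haC, h⟩) (by rw [hMe]; exact notMem_empty a)
      exact estimate y a haC hamax hab hgy
    · obtain ⟨a₁, ha₁M, ha₁max⟩ := hMcomp.exists_isMaxOn hMne f.continuous.continuousOn
      have ha₁max' : ∀ b ∈ M, f b ≤ f a₁ := fun b hb => isMaxOn_iff.mp ha₁max b hb
      have ha₁lt : f a₁ < f ahat := by
        rcases lt_or_eq_of_le (hahatmax a₁ ha₁M.1) with h | h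
        · exact h
        · exfalso
          have heq := huniq a₁ ha₁M.1 h
          have := ha₁M.2
          rw [heq] at this
          exact this (Metric.mem_ball_self hε)
      set γ := f ahat - f a₁ with hγdef
      have hγpos : 0 < γ := by rw [hγdef]; linarith
      set D := 2 * (R + ‖ahat‖ + 1) with hDdef
      have hDpos : 0 < D := by positivity
      set δ := min (γ / D) (r/2) with hδdef
      have hδpos : 0 < δ := lt_min (by positivity) (by positivity)
      refine ⟨δ, hδpos, fun y hy => ?_⟩
      obtain ⟨a, haC, hamax, hgy⟩ := hmax y
      have hyf : ‖y - f‖ < δ := by rwa [← dist_eq_norm]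
      have hkey : a ∈ Metric.ball ahat ε := by
        by_contra hnb
        have haM : a ∈ M := ⟨haC, hnb⟩
        have e1 : ∀ b ∈ C, |y b - f b| ≤ δ * R := by
          intro b hbC
          have h5 : ‖(y - f) b‖ ≤ ‖y - f‖ * ‖b‖ := (y - f).le_opNorm b
          rw [ContinuousLinearMap.sub_apply, Real.norm_eq_abs] at h5
          have h6 := hCnorm b hbC
          nlinarith [norm_nonneg (y - f), norm_nonneg b]
        have e2 : y a ≤ f a₁ + δ * R := by
          have h7 := (abs_le.mp (e1 a haC)).2
          have h8 := ha₁max' a haM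
          linarith
        have e3 : f ahat - δ * R ≤ y ahat := by
          have h9 := (abs_le.mp (e1 ahat hahatC)).1
          linarith
        have e4 : δ * (2 * R) < γ := by
          have h10 : δ ≤ γ / D := min_le_left _ _
          have h11 : δ * D ≤ γ := (le_div_iff₀ hDpos).mp h10
          have h12 : 2 * R < D := by rw [hDdef]; nlinarith [norm_nonneg ahat]
          nlinarith
        have hlt : y a < y ahat := by
          calc y a ≤ f a₁ + δ * R := e2
            _ < f ahat - δ * R := by rw [hγdef] at e4; nlinarith
            _ ≤ y ahat := e3
        exact absurd (hamax ahat hahatC) (not_le.mpr hlt)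
      exact estimate y a haC hamax hkey hgy
  -- lower bound
  have hlow : ∀ y : X →L[ℝ] ℝ, y ahat ≤ g y := by
    intro y
    obtain ⟨a, haC, hamax, hgy⟩ := hmax y
    rw [hgy]
    exact hamax ahat hahatC
  -- differentiability
  set L : (X →L[ℝ] ℝ) →L[ℝ] ℝ := ContinuousLinearMap.apply ℝ ℝ ahat with hLdef
  have hderiv : HasFDerivAt g L f := by
    rw [HasFDerivAt, hasFDerivAtFilter_iff_isLittleO, Asymptotics.isLittleO_iff]
    intro c hc
    obtain ⟨δ, hδpos, hδ⟩ := hF4 c hc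
    rw [Filter.prod_pure, Filter.eventually_map, Metric.eventually_nhds_iff]
    refine ⟨δ, hδpos, fun {y} hy => ?_⟩
    dsimp only
    have h1 := hδ y hy
    have h2 := hlow y
    have hLy : L (y - f) = y ahat - f ahat := by
      simp [hLdef, ContinuousLinearMap.sub_apply]
    rw [hLy, hgf]
    have heq3 : g y - f ahat - (y ahat - f ahat) = g y - y ahat := by ring
    rw [heq3, Real.norm_eq_abs, abs_of_nonneg (by linarith)]
    calc g y - y ahat ≤ c * dist y f := h1
      _ = c * ‖y - f‖ := by rw [dist_eq_norm]
  refine ⟨g, ?_, hderiv.differentiableAt⟩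
  have hev : ∀ y : X →L[ℝ] ℝ, dist y f ≤ r/2 → ((g y : ℝ) : EReal) = supportFn A y := by
    intro y hy
    obtain ⟨a, haC, hamax, hgy⟩ := hmax y
    apply le_antisymm
    · rw [hgy]
      simp only [supportFn]
      exact le_iSup₂_of_le a (hCsubA haC) le_rfl
    · simp only [supportFn]
      apply iSup₂_le
      intro b hb
      exact EReal.coe_le_coe_iff.mpr (hF1 y hy b hb)
  have hnb : Metric.closedBall f (r/2) ∈ 𝓝 f := Metric.closedBall_mem_nhds f (by positivity)
  exact Filter.eventually_of_mem hnb fun y hy => hev y (by rwa [Metric.mem_closedBall] at hy)
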